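/- arXiv:0907.5065 — 2 statements merged into one kernel-verified Lean document; each statement's English description precedes it below -/
import Mathlib

section
/- Let d ≥ 3 and λ ∈ [-2√(d-1), 2√(d-1)], and let φ(n) be the covariance function of the Gaussian wave process on T_d (as defined via Chebyshev polynomials). Then the linear combination (d + λ²)·φ(0) - 2dλ·φ(1) + d(d-1)·φ(2) = 0. -/
noncomputable def chebU (n : ℤ) (x : ℝ) : ℝ :=
  (Polynomial.Chebyshev.U ℝ n).eval x

noncomputable def phi (d : ℕ) (l : ℝ) (n : ℕ) : ℝ :=
  ((d : ℝ) - 1) ^ (-(n : ℝ) / 2) *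
    (((d : ℝ) - 1) / d * chebU (n : ℤ) (l / (2 * Real.sqrt ((d : ℝ) - 1)))
      - 1 / d * chebU ((n : ℤ) - 2) (l / (2 * Real.sqrt ((d : ℝ) - 1))))

/-- The covariance function of the Gaussian wave process satisfies the eigenvalue
identity `(d + l²) φ(0) - 2 d l φ(1) + d (d-1) φ(2) = 0`. -/
theorem phi_eigen_identity (d : ℕ) (hd : 3 ≤ d) (l : ℝ)
    (hl : l ∈ Set.Icc (-(2 * Real.sqrt ((d : ℝ) - 1))) (2 * Real.sqrt ((d : ℝ) - 1))) :
    ((d : ℝ) + l ^ 2) * phi d l 0 - 2 * d * l * phi d l 1 + d * ((d : ℝ) - 1) * phi d l 2 = 0 := by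
  have hd1 : (1:ℝ) < (d:ℝ) := by exact_mod_cast Nat.lt_of_lt_of_le (by norm_num) hd
  have hpos : (0:ℝ) < (d:ℝ) - 1 := by linarith
  have hs : Real.sqrt ((d:ℝ) - 1) > 0 := Real.sqrt_pos.mpr hpos
  have hs2 : Real.sqrt ((d:ℝ) - 1) ^ 2 = (d:ℝ) - 1 := Real.sq_sqrt hpos.le
  have hd0 : (0:ℝ) < (d:ℝ) := by linarith
  simp only [phi, chebU]
  norm_num [Polynomial.Chebyshev.U_zero, Polynomial.Chebyshev.U_one,
    Polynomial.Chebyshev.U_two, Polynomial.Chebyshev.U_neg_one,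
    Polynomial.Chebyshev.U_neg_two]
  rw [Real.rpow_neg hpos.le, Real.rpow_neg hpos.le, ← Real.sqrt_eq_rpow,
    Real.rpow_one]
  have e2 : 4 * (l / (2 * Real.sqrt ((d:ℝ) - 1))) ^ 2 = l ^ 2 / ((d:ℝ) - 1) := by
    rw [div_pow, mul_pow, hs2]; field_simp; ring
  have e3 : (Real.sqrt ((d:ℝ)-1))⁻¹ * (((d:ℝ) - 1) / d * (2 * (l / (2 * Real.sqrt ((d:ℝ) - 1))))) = l / d := by
    field_simp
    linear_combination (-l) * hs2
  rw [e2, e3]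
  field_simp
  ring
end

section
/- Let d ≥ 3, λ ∈ [-2√(d-1), 2√(d-1)], and let C be the 4×4 matrix with entries C_{ij} = φ(|i-j|) for 1 ≤ i,j ≤ 4, where φ is the Chebyshev covariance function of the Gaussian wave process. If C is invertible, then the conditional expectation weights w = C^{-1}·(φ(2), φ(1), φ(1), φ(2))^T (giving E(ψ(v_k) | ψ(v_{k±1}), ψ(v_{k±2})) = w·(ψ(v_{k-2}),ψ(v_{k-1}),ψ(v_{k+1}),ψ(v_{k+2}))) equal w = (-a_2/2, a_1/2, a_1/2, -a_2/2) with a_1 = 2dλ/(λ²+(d-1)²+1) and a_2 = 2(d-1)/(λ²+(d-1)²+1). -/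
open Matrix

lemma chebU_zero (x : ℝ) : chebU 0 x = 1 := by simp [chebU]
lemma chebU_one (x : ℝ) : chebU 1 x = 2 * x := by simp [chebU, Polynomial.Chebyshev.U_one]
lemma chebU_neg_one (x : ℝ) : chebU (-1) x = 0 := by simp [chebU, Polynomial.Chebyshev.U_neg_one]
lemma chebU_neg_two (x : ℝ) : chebU (-2) x = -1 := by simp [chebU, Polynomial.Chebyshev.U_neg_two]
lemma chebU_two (x : ℝ) : chebU 2 x = 4 * x ^ 2 - 1 := by
  simp [chebU, Polynomial.Chebyshev.U_two]
lemma chebU_three (x : ℝ) : chebU 3 x = 8 * x ^ 3 - 4 * x := by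
  have h : (3 : ℤ) = 1 + 2 := rfl
  rw [chebU, h, Polynomial.Chebyshev.U_add_two]
  simp [Polynomial.Chebyshev.U_two, Polynomial.Chebyshev.U_one]
  ring
lemma chebU_four (x : ℝ) : chebU 4 x = 16 * x ^ 4 - 12 * x ^ 2 + 1 := by
  have h : (4 : ℤ) = 2 + 2 := rfl
  rw [chebU, h, Polynomial.Chebyshev.U_add_two]
  have h2 : (2 + 1 : ℤ) = 1 + 2 := rfl
  rw [h2, Polynomial.Chebyshev.U_add_two]
  simp [Polynomial.Chebyshev.U_two, Polynomial.Chebyshev.U_one]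
  ring

lemma rpow_neg_half (x : ℝ) (hx : 0 ≤ x) (n : ℕ) :
    x ^ (-(n : ℝ) / 2) = ((Real.sqrt x) ^ n)⁻¹ := by
  have h : -(n : ℝ) / 2 = (1 / 2) * (-(n : ℝ)) := by ring
  rw [h, Real.rpow_mul hx, ← Real.sqrt_eq_rpow,
    Real.rpow_neg (Real.sqrt_nonneg x), Real.rpow_natCast]


lemma phi_zero (d : ℕ) (hd : 3 ≤ d) (l : ℝ) : phi d l 0 = 1 := by
  have hd1 : (2 : ℝ) ≤ (d : ℝ) - 1 := by
    have : (3 : ℝ) ≤ (d : ℝ) := by exact_mod_cast hd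
    linarith
  have hnn : (0 : ℝ) ≤ (d : ℝ) - 1 := by linarith
  have hd0 : (d : ℝ) ≠ 0 := by positivity
  rw [phi, rpow_neg_half _ hnn]
  norm_num [chebU_zero, chebU_neg_two]
  field_simp
  ring

lemma phi_one (d : ℕ) (hd : 3 ≤ d) (l : ℝ) : phi d l 1 = l / d := by
  have hd1 : (2 : ℝ) ≤ (d : ℝ) - 1 := by
    have : (3 : ℝ) ≤ (d : ℝ) := by exact_mod_cast hd
    linarith
  have hnn : (0 : ℝ) ≤ (d : ℝ) - 1 := by linarith
  have hs2 : Real.sqrt ((d : ℝ) - 1) ^ 2 = (d : ℝ) - 1 := Real.sq_sqrt hnn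
  have hs0 : Real.sqrt ((d : ℝ) - 1) ≠ 0 := ne_of_gt (Real.sqrt_pos.mpr (by linarith))
  rw [phi, rpow_neg_half _ hnn]
  norm_num [chebU_one, chebU_neg_one]
  set s := Real.sqrt ((d : ℝ) - 1) with hsdef
  rw [show (d : ℝ) = s ^ 2 + 1 by rw [hs2]; ring]
  have h1 : s ^ 2 + 1 ≠ 0 := by positivity
  field_simp
  ring

lemma phi_two (d : ℕ) (hd : 3 ≤ d) (l : ℝ) :
    phi d l 2 = (l ^ 2 - d) / (d * ((d : ℝ) - 1)) := by
  have hd1 : (2 : ℝ) ≤ (d : ℝ) - 1 := by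
    have : (3 : ℝ) ≤ (d : ℝ) := by exact_mod_cast hd
    linarith
  have hnn : (0 : ℝ) ≤ (d : ℝ) - 1 := by linarith
  have hs2 : Real.sqrt ((d : ℝ) - 1) ^ 2 = (d : ℝ) - 1 := Real.sq_sqrt hnn
  have hs0 : Real.sqrt ((d : ℝ) - 1) ≠ 0 := ne_of_gt (Real.sqrt_pos.mpr (by linarith))
  rw [phi, rpow_neg_half _ hnn]
  norm_num [chebU_two, chebU_zero]
  set s := Real.sqrt ((d : ℝ) - 1) with hsdef
  rw [show (d : ℝ) = s ^ 2 + 1 by rw [hs2]; ring]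
  have h1 : s ^ 2 + 1 ≠ 0 := by positivity
  field_simp
  ring

lemma phi_three (d : ℕ) (hd : 3 ≤ d) (l : ℝ) :
    phi d l 3 = (l ^ 3 - (2 * d - 1) * l) / (d * ((d : ℝ) - 1) ^ 2) := by
  have hd1 : (2 : ℝ) ≤ (d : ℝ) - 1 := by
    have : (3 : ℝ) ≤ (d : ℝ) := by exact_mod_cast hd
    linarith
  have hnn : (0 : ℝ) ≤ (d : ℝ) - 1 := by linarith
  have hs2 : Real.sqrt ((d : ℝ) - 1) ^ 2 = (d : ℝ) - 1 := Real.sq_sqrt hnn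
  have hs0 : Real.sqrt ((d : ℝ) - 1) ≠ 0 := ne_of_gt (Real.sqrt_pos.mpr (by linarith))
  rw [phi, rpow_neg_half _ hnn]
  norm_num [chebU_three, chebU_one]
  set s := Real.sqrt ((d : ℝ) - 1) with hsdef
  rw [show (d : ℝ) = s ^ 2 + 1 by rw [hs2]; ring]
  have h1 : s ^ 2 + 1 ≠ 0 := by positivity
  field_simp
  ring

lemma phi_four (d : ℕ) (hd : 3 ≤ d) (l : ℝ) :
    phi d l 4 = (l ^ 4 - (3 * d - 2) * l ^ 2 + d * ((d : ℝ) - 1)) / (d * ((d : ℝ) - 1) ^ 3) := by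
  have hd1 : (2 : ℝ) ≤ (d : ℝ) - 1 := by
    have : (3 : ℝ) ≤ (d : ℝ) := by exact_mod_cast hd
    linarith
  have hnn : (0 : ℝ) ≤ (d : ℝ) - 1 := by linarith
  have hs2 : Real.sqrt ((d : ℝ) - 1) ^ 2 = (d : ℝ) - 1 := Real.sq_sqrt hnn
  have hs0 : Real.sqrt ((d : ℝ) - 1) ≠ 0 := ne_of_gt (Real.sqrt_pos.mpr (by linarith))
  rw [phi, rpow_neg_half _ hnn]
  norm_num [chebU_four, chebU_two]
  set s := Real.sqrt ((d : ℝ) - 1) with hsdef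
  rw [show (d : ℝ) = s ^ 2 + 1 by rw [hs2]; ring]
  have h1 : s ^ 2 + 1 ≠ 0 := by positivity
  field_simp
  ring

/-- The conditional expectation weights of `psi(v_k)` given its four path-neighbours
`v_{k-2}, v_{k-1}, v_{k+1}, v_{k+2}` equal `(-a2/2, a1/2, a1/2, -a2/2)`, where
`a1 = 2dl/(l^2+(d-1)^2+1)` and `a2 = 2(d-1)/(l^2+(d-1)^2+1)`. -/
theorem conditional_weights (d : ℕ) (hd : 3 ≤ d) (l : ℝ)
    (hl : l ∈ Set.Icc (-(2 * Real.sqrt ((d : ℝ) - 1))) (2 * Real.sqrt ((d : ℝ) - 1)))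
    (C : Matrix (Fin 4) (Fin 4) ℝ)
    (hC : C = Matrix.of fun i j =>
      phi d l ((![(-2 : ℤ), -1, 1, 2] i) - (![(-2 : ℤ), -1, 1, 2] j)).natAbs)
    (hinv : IsUnit C.det) :
    C⁻¹ *ᵥ ![phi d l 2, phi d l 1, phi d l 1, phi d l 2]
      = ![-(2 * ((d : ℝ) - 1) / (l ^ 2 + ((d : ℝ) - 1) ^ 2 + 1)) / 2,
          (2 * d * l / (l ^ 2 + ((d : ℝ) - 1) ^ 2 + 1)) / 2,
          (2 * d * l / (l ^ 2 + ((d : ℝ) - 1) ^ 2 + 1)) / 2,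
          -(2 * ((d : ℝ) - 1) / (l ^ 2 + ((d : ℝ) - 1) ^ 2 + 1)) / 2] := by
  have hd1 : (2 : ℝ) ≤ (d : ℝ) - 1 := by
    have : (3 : ℝ) ≤ (d : ℝ) := by exact_mod_cast hd
    linarith
  have hd0 : (d : ℝ) ≠ 0 := by positivity
  have hdm1 : (d : ℝ) - 1 ≠ 0 := by linarith
  have hD0 : l ^ 2 + ((d : ℝ) - 1) ^ 2 + 1 ≠ 0 := by positivity
  set w : Fin 4 → ℝ :=
    ![-(2 * ((d : ℝ) - 1) / (l ^ 2 + ((d : ℝ) - 1) ^ 2 + 1)) / 2,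
      (2 * d * l / (l ^ 2 + ((d : ℝ) - 1) ^ 2 + 1)) / 2,
      (2 * d * l / (l ^ 2 + ((d : ℝ) - 1) ^ 2 + 1)) / 2,
      -(2 * ((d : ℝ) - 1) / (l ^ 2 + ((d : ℝ) - 1) ^ 2 + 1)) / 2] with hw
  have key : C *ᵥ w = ![phi d l 2, phi d l 1, phi d l 1, phi d l 2] := by
    subst hC
    funext i
    fin_cases i <;>
    · simp [Matrix.mulVec, dotProduct, Fin.sum_univ_four, hw]
      norm_num
      simp only [phi_zero d hd, phi_one d hd, phi_two d hd, phi_three d hd, phi_four d hd]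
      field_simp
      ring
  calc C⁻¹ *ᵥ ![phi d l 2, phi d l 1, phi d l 1, phi d l 2]
      = C⁻¹ *ᵥ (C *ᵥ w) := by rw [key]
    _ = w := by rw [Matrix.mulVec_mulVec, Matrix.nonsing_inv_mul C hinv, Matrix.one_mulVec]
end
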